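/- Let ν be a Borel probability measure on [0,1]^d absolutely continuous with respect to Lebesgue measure, λ ≥ 0, c ∈ ℝ, and f(x) = c + λ·ν([0,x]). Let P_n = {x_0,…,x_{n-1}} ⊂ [0,1]^d have non-positive local discrepancy (δ(z;P_n) ≤ 0 for all z). Then (1/n)∑_{i=0}^{n-1} f(1−x_i) ≤ ∫_{[0,1]^d} f(x) dx. -/

import Mathlib

open MeasureTheory

/-- If `f(x) = c + λ·ν([0,x])` for a Borel probability measure `ν` on `[0,1]^d` that is
absolutely continuous w.r.t. Lebesgue measure, `λ ≥ 0`, and the point set `{x_i}` has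
non-positive local discrepancy, then the equal-weight rule at the reflected points
`1 - x_i` gives a lower bound for `∫_{[0,1]^d} f`. -/
theorem stmt4 (d n : ℕ) (hn : 0 < n)
    (ν : Measure (Fin d → ℝ)) [IsProbabilityMeasure ν]
    (hνsupp : ν (Set.Icc (0 : Fin d → ℝ) 1)ᶜ = 0)
    (hac : ν ≪ (volume : Measure (Fin d → ℝ)))
    (lam c : ℝ) (hlam : 0 ≤ lam)
    (f : (Fin d → ℝ) → ℝ)
    (hf : ∀ x, f x = c + lam * (ν (Set.Icc 0 x)).toReal)
    (x : Fin n → Fin d → ℝ) (hx : ∀ i j, x i j ∈ Set.Icc (0:ℝ) 1)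
    (hnpld : ∀ z : Fin d → ℝ, (∀ j, z j ∈ Set.Icc (0:ℝ) 1) →
      (Nat.card {i : Fin n // ∀ j, x i j < z j} : ℝ) / n ≤ ∏ j, z j) :
    (1 / n : ℝ) * ∑ i, f (fun j => 1 - x i j) ≤ ∫ y in Set.Icc (0 : Fin d → ℝ) 1, f y := by
  classical
  set Q : Set (Fin d → ℝ) := Set.Icc 0 1 with hQ
  have hvolQ : volume Q = 1 := by
    rw [hQ, Real.volume_Icc_pi]
    simp
  -- measurability of y ↦ ν (Icc 0 y)
  have hA : MeasurableSet {p : (Fin d → ℝ) × (Fin d → ℝ) | p.2 ∈ Set.Icc 0 p.1} := by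
    have : {p : (Fin d → ℝ) × (Fin d → ℝ) | p.2 ∈ Set.Icc 0 p.1}
        = ⋂ j, ({p | 0 ≤ p.2 j} ∩ {p | p.2 j ≤ p.1 j}) := by
      ext p
      simp [Set.mem_Icc, Pi.le_def, forall_and]
    rw [this]
    refine MeasurableSet.iInter fun j => MeasurableSet.inter ?_ ?_
    · exact measurableSet_le measurable_const (by fun_prop)
    · exact measurableSet_le (by fun_prop) (by fun_prop)
  have hmeasν : Measurable fun y : Fin d → ℝ => ν (Set.Icc 0 y) := by
    have := measurable_measure_prodMk_left (ν := ν) hA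
    exact this
  -- the auxiliary function h y = ∏ (1 - y j) in ℝ≥0∞
  set h : (Fin d → ℝ) → ENNReal := fun y => ∏ j, ENNReal.ofReal (1 - y j) with hh
  have hmeash : Measurable h := by
    refine Finset.measurable_prod _ fun j _ => ?_
    exact ENNReal.measurable_ofReal.comp (measurable_const.sub (measurable_pi_apply j))
  -- a.e. membership in Q
  have haeQ : ∀ᵐ y ∂ν, y ∈ Q := by
    rw [MeasureTheory.ae_iff]
    exact hνsupp
  -- Tonelli: ∫⁻_{Q} ν(Icc 0 x) dx = ∫⁻ h dν
  set I : ENNReal := ∫⁻ x in Q, ν (Set.Icc 0 x) ∂volume with hI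
  have hTon : I = ∫⁻ y, h y ∂ν := by
    have h1 : I = ((volume.restrict Q).prod ν)
        {p : (Fin d → ℝ) × (Fin d → ℝ) | p.2 ∈ Set.Icc 0 p.1} := by
      rw [Measure.prod_apply hA]
      rfl
    have h2 : ((volume.restrict Q).prod ν)
        {p : (Fin d → ℝ) × (Fin d → ℝ) | p.2 ∈ Set.Icc 0 p.1}
        = ∫⁻ y, (volume.restrict Q) {x | y ∈ Set.Icc 0 x} ∂ν := by
      rw [Measure.prod_apply_symm hA]
      rfl
    rw [h1, h2]
    refine lintegral_congr_ae ?_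
    filter_upwards [haeQ] with y hy
    have hy' := hy
    rw [hQ, Set.mem_Icc] at hy'
    have hms : MeasurableSet {x : Fin d → ℝ | y ∈ Set.Icc 0 x} := by
      have : {x : Fin d → ℝ | y ∈ Set.Icc 0 x} = (fun x => (x, y)) ⁻¹'
          {p : (Fin d → ℝ) × (Fin d → ℝ) | p.2 ∈ Set.Icc 0 p.1} := rfl
      rw [this]
      exact hA.preimage (measurable_id.prodMk measurable_const)
    rw [Measure.restrict_apply hms]
    have hset : {x : Fin d → ℝ | y ∈ Set.Icc 0 x} ∩ Q = Set.Icc y 1 := by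
      ext z
      simp only [Set.mem_inter_iff, Set.mem_setOf_eq, Set.mem_Icc, hQ]
      constructor
      · rintro ⟨⟨_, h2⟩, _, h4⟩
        exact ⟨h2, h4⟩
      · rintro ⟨h1, h2⟩
        exact ⟨⟨hy'.1, h1⟩, le_trans hy'.1 h1, h2⟩
    rw [hset, Real.volume_Icc_pi]
    simp [hh]
  have hIfin : I ≠ ⊤ := by
    have : I ≤ 1 := by
      calc I ≤ ∫⁻ _ in Q, 1 ∂volume := by
            exact lintegral_mono fun x => prob_le_one
        _ = volume Q := by simp
        _ = 1 := hvolQ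
    exact ne_top_of_le_ne_top ENNReal.one_ne_top this
  -- the point sets
  set S : Fin n → Set (Fin d → ℝ) := fun i => Set.Icc 0 (fun j => 1 - x i j) with hS
  have hSm : ∀ i, MeasurableSet (S i) := fun i => measurableSet_Icc
  -- sum of measures as an integral of the counting function
  have hsum : ∑ i, ν (S i) = ∫⁻ y, ∑ i, (S i).indicator (1 : (Fin d → ℝ) → ENNReal) y ∂ν := by
    rw [lintegral_finset_sum _ fun i _ => measurable_one.indicator (hSm i)]
    simp_rw [lintegral_indicator_one (hSm _)]
  -- null set of "boundary" points
  have hE : ν {y : Fin d → ℝ | ∃ i j, y j = 1 - x i j} = 0 := by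
    apply hac
    have : {y : Fin d → ℝ | ∃ i j, y j = 1 - x i j}
        = ⋃ i, ⋃ j, {y : Fin d → ℝ | y j = 1 - x i j} := by
      ext y; simp
    rw [this]
    refine measure_iUnion_null fun i => measure_iUnion_null fun j => ?_
    have hplane : {y : Fin d → ℝ | y j = 1 - x i j}
        = Set.pi Set.univ (fun k => if k = j then ({1 - x i j} : Set ℝ) else Set.univ) := by
      ext y
      simp only [Set.mem_setOf_eq, Set.mem_pi, Set.mem_univ, forall_true_left]
      constructor
      · intro hyj k
        by_cases hk : k = j
        · subst hk; simp [hyj]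
        · simp [hk]
      · intro hall
        have := hall j
        simpa using this
    rw [hplane, volume_pi_pi]
    exact Finset.prod_eq_zero (Finset.mem_univ j) (by simp)
  have hEae : ∀ᵐ y ∂ν, ∀ i j, y j ≠ 1 - x i j := by
    rw [MeasureTheory.ae_iff]
    convert hE using 2
    ext y
    simp
  -- a.e. pointwise bound on the counting function
  have hae : ∀ᵐ y ∂ν, (∑ i, (S i).indicator (1 : (Fin d → ℝ) → ENNReal) y)
      ≤ (n : ENNReal) * h y := by
    filter_upwards [haeQ, hEae] with y hyQ hyE
    rw [hQ, Set.mem_Icc] at hyQ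
    have hy0 : ∀ j, (0:ℝ) ≤ y j := fun j => by simpa using hyQ.1 j
    have hy1 : ∀ j, y j ≤ 1 := fun j => by simpa using hyQ.2 j
    -- counting function equals card of a filter
    have hcount : (∑ i, (S i).indicator (1 : (Fin d → ℝ) → ENNReal) y)
        = ((Finset.univ.filter fun i => y ∈ S i).card : ENNReal) := by
      rw [Finset.card_filter, Nat.cast_sum]
      exact Finset.sum_congr rfl fun i _ => by
        by_cases hmem : y ∈ S i <;> simp [Set.indicator_apply, hmem]
    -- the filter predicate is equivalent to the strict one
    have hpred : ∀ i : Fin n, y ∈ S i ↔ ∀ j, x i j < 1 - y j := by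
      intro i
      rw [hS]
      simp only [Set.mem_Icc, Pi.le_def]
      constructor
      · rintro ⟨-, h2⟩ j
        have h2j : y j ≤ 1 - x i j := h2 j
        have hle : x i j ≤ 1 - y j := by linarith
        have hne : x i j ≠ 1 - y j := by
          intro hcontra
          exact hyE i j (by linarith)
        exact lt_of_le_of_ne hle hne
      · intro hlt
        refine ⟨fun j => (hyQ.1 j), fun j => ?_⟩
        · have := hlt j
          show y j ≤ 1 - x i j
          linarith
    -- apply the discrepancy hypothesis at z = 1 - y
    have hz : ∀ j, (1 - y j) ∈ Set.Icc (0:ℝ) 1 := by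
      intro j
      rw [Set.mem_Icc]
      constructor
      · linarith [hy1 j]
      · linarith [hy0 j]
    have hkey := hnpld (fun j => 1 - y j) hz
    have hcard : (Nat.card {i : Fin n // ∀ j, x i j < 1 - y j})
        = (Finset.univ.filter fun i => y ∈ S i).card := by
      rw [Nat.card_eq_fintype_card, Fintype.card_subtype]
      congr 1
      apply Finset.filter_congr
      intro i _
      simp [hpred i]
    have hreal : ((Finset.univ.filter fun i => y ∈ S i).card : ℝ)
        ≤ n * ∏ j, (1 - y j) := by
      rw [← hcard]
      beta_reduce at hkey
      rw [div_le_iff₀ (by positivity : (0:ℝ) < n)] at hkey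
      linarith [hkey]
    have hprodnn : (0:ℝ) ≤ ∏ j, (1 - y j) :=
      Finset.prod_nonneg fun j _ => by linarith [hy1 j]
    rw [hcount]
    calc ((Finset.univ.filter fun i => y ∈ S i).card : ENNReal)
        = ENNReal.ofReal ((Finset.univ.filter fun i => y ∈ S i).card : ℝ) := by
          simp
      _ ≤ ENNReal.ofReal (n * ∏ j, (1 - y j)) := ENNReal.ofReal_le_ofReal hreal
      _ = (n : ENNReal) * h y := by
          rw [ENNReal.ofReal_mul (by positivity), hh,
            ENNReal.ofReal_prod_of_nonneg fun j _ => by linarith [hy1 j]]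
          simp
  -- the main ℝ≥0∞ inequality
  have hle : ∑ i, ν (S i) ≤ (n : ENNReal) * I := by
    rw [hsum, hTon]
    calc (∫⁻ y, ∑ i, (S i).indicator (1 : (Fin d → ℝ) → ENNReal) y ∂ν)
        ≤ ∫⁻ y, (n : ENNReal) * h y ∂ν := lintegral_mono_ae hae
      _ = (n : ENNReal) * ∫⁻ y, h y ∂ν := lintegral_const_mul _ hmeash
  -- real version
  have hkeyR : ∑ i, (ν (S i)).toReal ≤ n * I.toReal := by
    have hfin : ∀ i ∈ Finset.univ, ν (S i) ≠ ⊤ := fun i _ => measure_ne_top ν _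
    have h1 := ENNReal.toReal_mono
      (ENNReal.mul_ne_top (ENNReal.natCast_ne_top n) hIfin) hle
    rw [ENNReal.toReal_mul, ENNReal.toReal_sum hfin] at h1
    simpa using h1
  -- integral computations
  have : IsFiniteMeasure (volume.restrict Q) :=
    ⟨by rw [Measure.restrict_apply_univ, hvolQ]; exact ENNReal.one_lt_top⟩
  have hg_int : IntegrableOn (fun y => (ν (Set.Icc 0 y)).toReal) Q volume := by
    refine Integrable.mono' (integrable_const (1:ℝ))
      hmeasν.ennreal_toReal.aestronglyMeasurable (ae_of_all _ fun y => ?_)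
    rw [Real.norm_eq_abs, abs_of_nonneg ENNReal.toReal_nonneg]
    calc (ν (Set.Icc 0 y)).toReal ≤ (ν Set.univ).toReal :=
          ENNReal.toReal_mono (measure_ne_top ν _) (measure_mono (Set.subset_univ _))
      _ = 1 := by simp
  have hgI : ∫ y in Q, (ν (Set.Icc 0 y)).toReal ∂volume = I.toReal := by
    rw [hI, ← integral_toReal hmeasν.aemeasurable.restrict
      (ae_of_all _ fun y => measure_lt_top ν _)]
  have hRHS : ∫ y in Q, f y ∂volume = c + lam * I.toReal := by
    have : ∀ y, f y = c + lam * (ν (Set.Icc 0 y)).toReal := hf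
    rw [integral_congr_ae (ae_of_all _ this),
      integral_add (integrable_const c) (hg_int.const_mul lam),
      integral_const, integral_const_mul, hgI]
    simp [measureReal_def, Measure.restrict_apply_univ, hvolQ]
  -- LHS computation
  have hLHS : (1 / n : ℝ) * ∑ i, f (fun j => 1 - x i j)
      = c + lam * ((1 / n : ℝ) * ∑ i, (ν (S i)).toReal) := by
    have hfs : ∀ i : Fin n, f (fun j => 1 - x i j) = c + lam * (ν (S i)).toReal := by
      intro i
      rw [hf, hS]
    simp_rw [hfs]
    rw [Finset.sum_add_distrib, Finset.sum_const, Finset.card_univ, Fintype.card_fin,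
      ← Finset.mul_sum]
    have hn' : (n:ℝ) ≠ 0 := Nat.cast_ne_zero.mpr hn.ne'
    field_simp
    ring
  rw [hLHS, hRHS]
  have hfrac : (1 / n : ℝ) * ∑ i, (ν (S i)).toReal ≤ I.toReal := by
    rw [div_mul_eq_mul_div, one_mul, div_le_iff₀ (by positivity)]
    linarith [hkeyR]
  have := mul_le_mul_of_nonneg_left hfrac hlam
  linarith
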